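/- Let F be a field with char F ≠ 2 and θ ∈ Fˣ. Let a_θ = [[0,1],[θ,0]] and let M ∈ GL₄(F) be the block-diagonal matrix diag(a_θ, a_θ). For x = (x₁,x₂,x₃,x₄,x₅) ∈ F⁵ let T(x) be the 4×4 matrix with rows (−x₃/2, x₄, x₁/2, 0), (x₂/2, x₃/2, 0, −x₁/2), (x₅, 0, x₃/2, x₄), (0, −x₅, x₂/2, −x₃/2). Then M·T(x₁,x₂,x₃,x₄,x₅)·M⁻¹ = T(−x₁, 2θx₄, −x₃, x₂/(2θ), −x₅). In other words, under the identification x ↦ T(x), conjugation by M acts on F⁵ by the linear map (x₁,x₂,x₃,x₄,x₅) ↦ (−x₁, 2θx₄, −x₃, x₂/(2θ), −x₅). -/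

import Mathlib

open Matrix

/-- conjugation by `M = diag(a_θ, a_θ)` acts, under the identification
`x ↦ T(x)` of `F⁵` with `X`, by `(x₁,x₂,x₃,x₄,x₅) ↦ (−x₁, 2θx₄, −x₃, x₂/(2θ), −x₅)`. -/
theorem stmt_1 {F : Type*} [Field F] (h2 : (2 : F) ≠ 0) (θ : F) (hθ : θ ≠ 0)
    (T : (Fin 5 → F) → Matrix (Fin 4) (Fin 4) F)
    (hT : ∀ x : Fin 5 → F, T x =
      !![-(x 2)/2,  x 3,      (x 0)/2,  0;
         (x 1)/2,   (x 2)/2,  0,        -(x 0)/2;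
         x 4,       0,        (x 2)/2,  x 3;
         0,         -(x 4),   (x 1)/2,  -(x 2)/2])
    (M : Matrix (Fin 4) (Fin 4) F)
    (hM : M = !![0,1,0,0; θ,0,0,0; 0,0,0,1; 0,0,θ,0]) :
    ∀ x : Fin 5 → F,
      M * T x * M⁻¹
        = T ![-(x 0), 2*θ*(x 3), -(x 2), (x 1)/(2*θ), -(x 4)] := by
  intro x
  have hdet : IsUnit M.det := by
    have : M.det = θ * θ := by
      subst hM
      simp [Matrix.det_succ_row_zero, Fin.sum_univ_succ, Fin.succAbove]
    rw [this]; exact (hθ.isUnit).mul hθ.isUnit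
  haveI := M.invertibleOfIsUnitDet hdet
  rw [Matrix.mul_inv_eq_iff_eq_mul_of_invertible]
  rw [hT, hT, hM]
  ext i j
  fin_cases i <;> fin_cases j <;>
    simp [Matrix.mul_apply, Fin.sum_univ_succ] <;>
    (try field_simp) <;> (try ring) <;> tauto
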